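/- Let H be a hyperbolic quadric in P^{2n+1}(K), n ≥ 1. Then every (n+1)-dimensional projective subspace of P^{2n+1}(K) contains a pair of non-collinear points of H, i.e., two points of H whose joining line is not contained in H. -/

import Mathlib

/-!
Formalization of definitions from "On the varieties of the second row of the
split Freudenthal-Tits Magic Square" by Schillewaert and Van Maldeghem.

Points of the projective space `P(V)` are elements of `ℙ K V`; projective
subspaces are represented by linear subspaces (`Submodule K V`), so a projective
`k`-space corresponds to a submodule of linear dimension `k + 1`.
-/

open scoped LinearAlgebra.Projectivization
open Projectivization Module

namespace MMset

variable {K : Type*} [Field K] {V : Type*} [AddCommGroup V] [Module K V]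

/-- The set of projective points lying in a linear subspace `W ≤ V`. -/
def projPts (W : Submodule K V) : Set (ℙ K V) := {x | x.rep ∈ W}

/-- The projective line through two points, as a linear subspace of `V`. -/
def lineThrough (x y : ℙ K V) : Submodule K V := Submodule.span K {x.rep, y.rep}

/-- A subspace is singular (w.r.t. the point set `X`) if all its points belong to `X`. -/
def IsSingular (X : Set (ℙ K V)) (W : Submodule K V) : Prop := projPts W ⊆ X

/-- A singular line: a projective line (2-dimensional linear subspace) all of
whose points belong to `X`. -/
def IsSingularLine (X : Set (ℙ K V)) (W : Submodule K V) : Prop :=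
  Module.finrank K ↥W = 2 ∧ projPts W ⊆ X

/-- Two points of `X` are `X`-collinear if they lie on a common singular line. -/
def XCollinear (X : Set (ℙ K V)) (x y : ℙ K V) : Prop :=
  x ∈ X ∧ y ∈ X ∧ ∃ L : Submodule K V, IsSingularLine X L ∧ x.rep ∈ L ∧ y.rep ∈ L

/-- `S` is the point set of a non-singular split quadric in the subspace `W`:
there is a quadratic form `Q` on `W` which is non-singular (no nonzero singular
vector of the quadric lies in the radical of the polar form) and of maximal Witt
index (it admits a totally singular subspace of linear dimension `⌊dim W / 2⌋`),
whose projective zero locus is exactly `S`.  (For `dim W = d + 2` this is the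
hyperbolic quadric if `d` is even and the parabolic quadric if `d` is odd.) -/
def IsSplitQuadric (W : Submodule K V) (S : Set (ℙ K V)) : Prop :=
  ∃ Q : QuadraticForm K ↥W,
    (∀ v : ↥W, Q v = 0 → (∀ w : ↥W, QuadraticMap.polar Q v w = 0) → v = 0) ∧
    (∃ U : Submodule K ↥W, (∀ u ∈ U, Q u = 0) ∧
        Module.finrank K ↥U = Module.finrank K ↥W / 2) ∧
    S = {x : ℙ K V | ∃ h : x.rep ∈ W, Q ⟨x.rep, h⟩ = 0}

/-- The (projective) tangent set at `x` to the quadric `X ∩ ξ`: the points `y` of `ξ`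
such that `y = x`, or the line `⟨x,y⟩` meets `X` only in `x`, or the line `⟨x,y⟩`
is entirely contained in `X`. -/
def tangentSet (X : Set (ℙ K V)) (ξ : Submodule K V) (x : ℙ K V) : Set (ℙ K V) :=
  {y | y.rep ∈ ξ ∧ (y = x ∨
     (∀ z : ℙ K V, z.rep ∈ lineThrough x y → z ∈ X → z = x) ∨
     projPts (lineThrough x y) ⊆ X)}

/-- The tangent space `T_x(ξ)`, as a linear subspace of `V`. -/
def tangentSub (X : Set (ℙ K V)) (ξ : Submodule K V) (x : ℙ K V) : Submodule K V :=
  Submodule.span K (Projectivization.rep '' tangentSet X ξ x)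

/-- The space `T_x` generated by all the tangent spaces `T_x(ξ)`, `x ∈ ξ ∈ Ξ`. -/
def Tspace (X : Set (ℙ K V)) (Xi : Set (Submodule K V)) (x : ℙ K V) : Submodule K V :=
  Submodule.span K (Projectivization.rep '' ⋃ ξ ∈ {ξ ∈ Xi | x.rep ∈ ξ}, tangentSet X ξ x)

/-- A pre-Mazzocca-Melone set of split type `d` with ambient (sub)space `W`:
`X` spans `W`, every `ξ ∈ Ξ` is a `(d+1)`-dimensional projective subspace of `W`
meeting `X` in a non-singular split quadric (a symp), and axioms (MM1) and (MM2)
hold. -/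
structure IsPreMM (d : ℕ) (W : Submodule K V) (X : Set (ℙ K V))
    (Xi : Set (Submodule K V)) : Prop where
  spans : Submodule.span K (Projectivization.rep '' X) = W
  xi_le : ∀ ξ ∈ Xi, ξ ≤ W
  xi_rank : ∀ ξ ∈ Xi, Module.finrank K ↥ξ = d + 2
  xi_quadric : ∀ ξ ∈ Xi, IsSplitQuadric ξ (X ∩ projPts ξ)
  mm1 : ∀ x ∈ X, ∀ y ∈ X, ∃ ξ ∈ Xi, x.rep ∈ ξ ∧ y.rep ∈ ξ
  mm2 : ∀ ξ₁ ∈ Xi, ∀ ξ₂ ∈ Xi, ξ₁ ≠ ξ₂ → projPts (ξ₁ ⊓ ξ₂) ⊆ X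

/-- A Mazzocca-Melone set of split type `d`: a pre-Mazzocca-Melone set which
moreover satisfies (MM3): for every `x ∈ X` the space `T_x` has projective
dimension at most `2d` (i.e. linear dimension at most `2d + 1`). -/
structure IsMM (d : ℕ) (W : Submodule K V) (X : Set (ℙ K V))
    (Xi : Set (Submodule K V)) extends IsPreMM d W X Xi : Prop where
  mm3 : ∀ x ∈ X, Module.rank K ↥(Tspace X Xi x) ≤ (2 * d + 1 : ℕ)

/-- The point set `X_p` of the residue at `p`, w.r.t. a hyperplane `C` of `T_p` not
containing `p`: the points of `C` lying on a singular line of `X` through `p`. -/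
def residuePts (X : Set (ℙ K V)) (p : ℙ K V) (C : Submodule K V) : Set (ℙ K V) :=
  {y | y.rep ∈ C ∧ IsSingularLine X (lineThrough p y)}

/-- The family `Ξ_p` of the residue at `p`: the subspaces `C ∩ T_p(ξ)`, `p ∈ ξ ∈ Ξ`. -/
def residueXi (X : Set (ℙ K V)) (Xi : Set (Submodule K V)) (p : ℙ K V)
    (C : Submodule K V) : Set (Submodule K V) :=
  {W | ∃ ξ ∈ Xi, p.rep ∈ ξ ∧ W = C ⊓ tangentSub X ξ p}

/-- The point set `X ⊆ ℙ(V)` is projectively equivalent to `Y ⊆ ℙ(V')`: there is a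
linear map `V → V'` injective on the span of `X` carrying `X` exactly onto `Y`. -/
def ProjEquivalent {V' : Type*} [AddCommGroup V'] [Module K V']
    (X : Set (ℙ K V)) (Y : Set (ℙ K V')) : Prop :=
  ∃ f : V →ₗ[K] V',
    Set.InjOn f (Submodule.span K (Projectivization.rep '' X) : Submodule K V) ∧
    Y = {q : ℙ K V' | ∃ x ∈ X, ∃ hq : f x.rep ≠ 0, q = Projectivization.mk K (f x.rep) hq}

end MMset

namespace MMset

variable (K : Type*) [Field K]

/-- The quadric Veronese variety `𝒱₂(K) ⊆ ℙ⁵(K)`: the image of `ℙ²(K)` under the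
Veronese map. -/
noncomputable def veroneseVariety : Set (ℙ K (Fin 6 → K)) :=
  {p | ∃ (x : Fin 3 → K) (c : K),
    p.rep = c • ![x 0 * x 0, x 1 * x 1, x 2 * x 2, x 0 * x 1, x 0 * x 2, x 1 * x 2]}

/-- The Segre variety `𝒮_{k,ℓ}(K) ⊆ ℙ^{kℓ+k+ℓ}(K)`: the image of
`ℙ^k(K) × ℙ^ℓ(K)` under the Segre map. -/
noncomputable def segreVariety (k l : ℕ) : Set (ℙ K (Fin (k + 1) × Fin (l + 1) → K)) :=
  {p | ∃ (x : Fin (k + 1) → K) (y : Fin (l + 1) → K) (c : K),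
    p.rep = c • fun ij => x ij.1 * y ij.2}

/-- The line Grassmannian variety `𝒢_{m,1}(K) ⊆ ℙ^{(m²+m-2)/2}(K)`: the image of
the set of lines of `ℙ^m(K)` under the Plücker map. -/
noncomputable def grassmannVariety (m : ℕ) :
    Set (ℙ K ({ij : Fin (m + 1) × Fin (m + 1) // ij.1 < ij.2} → K)) :=
  {p | ∃ (x y : Fin (m + 1) → K) (c : K),
    p.rep = c • fun ij => x ij.1.1 * y ij.1.2 - x ij.1.2 * y ij.1.1}

/-- The standard hyperbolic quadratic form `x₀x₁ + ⋯ + x_{2m-2}x_{2m-1}` on `K^{2m}`. -/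
def hypForm (m : ℕ) (x : Fin (2 * m) → K) : K :=
  ∑ i : Fin m, x ⟨2 * i.1, by omega⟩ * x ⟨2 * i.1 + 1, by omega⟩

/-- The hyperbolic quadric in `ℙ^{2m-1}(K)` (the variety `𝒟_{m,1}(K)`). -/
noncomputable def hypQuadric (m : ℕ) : Set (ℙ K (Fin (2 * m) → K)) :=
  {p | hypForm K m p.rep = 0}

/-- The standard parabolic quadratic form `x₀² + x₁x₂ + ⋯ + x_{2m-1}x_{2m}` on
`K^{2m+1}`. -/
def parForm (m : ℕ) (x : Fin (2 * m + 1) → K) : K :=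
  x 0 * x 0 + ∑ i : Fin m, x ⟨2 * i.1 + 1, by omega⟩ * x ⟨2 * i.1 + 2, by omega⟩

/-- The parabolic quadric in `ℙ^{2m}(K)` (the variety `ℬ_{m,1}(K)`). -/
noncomputable def parQuadric (m : ℕ) : Set (ℙ K (Fin (2 * m + 1) → K)) :=
  {p | parForm K m p.rep = 0}

/-- The half-spinor space of `D_n`: the even part `⋀^{even} U_∞` of the exterior
algebra of an `n`-dimensional space `U_∞` (a maximal singular subspace of the
hyperbolic quadric in `ℙ^{2n-1}(K)`). -/
noncomputable def halfSpinorSpace (n : ℕ) : Submodule K (ExteriorAlgebra K (Fin n → K)) :=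
  ⨆ i : ℕ, ⋀[K]^(2 * i) (Fin n → K)

/-- The Clifford action `φ_u`, for `u = (u₀, u_∞) ∈ U₀ ⊕ U_∞` (with `U₀ ≅ (U_∞)^*`),
on the spinor space `⋀ U_∞`: contraction by `u₀` plus (left) wedge multiplication
by `u_∞`. -/
noncomputable def cliffordAction {n : ℕ} (u : Module.Dual K (Fin n → K) × (Fin n → K))
    (s : ExteriorAlgebra K (Fin n → K)) : ExteriorAlgebra K (Fin n → K) :=
  CliffordAlgebra.contractLeft (Q := (0 : QuadraticForm K (Fin n → K))) u.1 s +
    ExteriorAlgebra.ι K u.2 * s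

/-- The annihilator of a spinor `s`: the subspace of `U₀ ⊕ U_∞ ≅ K^{2n}` consisting
of all `u` with `φ_u(s) = 0`; it is always a singular subspace for the hyperbolic
form `q(u₀, u_∞) = u₀(u_∞)` on `U₀ ⊕ U_∞`. -/
noncomputable def spinorAnnihilator {n : ℕ} (s : ExteriorAlgebra K (Fin n → K)) :
    Submodule K (Module.Dual K (Fin n → K) × (Fin n → K)) where
  carrier := {u | cliffordAction K u s = 0}
  add_mem' := by
    intro a b ha hb
    simp only [Set.mem_setOf_eq, cliffordAction] at *
    rw [Prod.fst_add, Prod.snd_add, map_add, map_add, LinearMap.add_apply, add_mul]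
    rw [show ∀ x y z w : ExteriorAlgebra K (Fin n → K),
      x + y + (z + w) = (x + z) + (y + w) from by intros; abel]
    rw [ha, hb, add_zero]
  zero_mem' := by
    simp [cliffordAction]
  smul_mem' := by
    intro c a ha
    simp only [Set.mem_setOf_eq, cliffordAction] at *
    rw [Prod.smul_fst, Prod.smul_snd, map_smul, map_smul, LinearMap.smul_apply, smul_mul_assoc,
      ← smul_add, ha, smul_zero]

/-- The half-spin variety `𝒟_{n,n}(K) ⊆ ℙ^{2^{n-1}-1}(K)`: the points of the
half-spinor space represented by pure spinors, i.e. spinors `s_U` whose annihilator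
is a maximal singular subspace `U` (of linear dimension `n`) of the hyperbolic
quadric on `K^{2n}`. -/
noncomputable def halfSpinVariety (n : ℕ) : Set (ℙ K ↥(halfSpinorSpace K n)) :=
  {p | Module.finrank K
        ↥(spinorAnnihilator K ((p.rep : ExteriorAlgebra K (Fin n → K)))) = n}

/-- The cubic form `d(x) = det x⁽¹⁾ + det x⁽²⁾ + det x⁽³⁾ − Tr(x⁽¹⁾x⁽²⁾x⁽³⁾)` on the
`27`-dimensional space of triples of `3×3` matrices (over any commutative ring). -/
def e6CubicForm {R : Type*} [CommRing R] (x : Fin 3 → Matrix (Fin 3) (Fin 3) R) : R :=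
  (x 0).det + (x 1).det + (x 2).det - (x 0 * x 1 * x 2).trace

/-- The derivative `∂_x d(y)` of the cubic form `d` at `x`: the coefficient of `t`
in the expansion of `d(x + t·y)`. -/
noncomputable def e6Deriv (x y : Fin 3 → Matrix (Fin 3) (Fin 3) K) : K :=
  (e6CubicForm (fun i =>
    (x i).map Polynomial.C + (Polynomial.X : Polynomial K) • (y i).map Polynomial.C)).coeff 1

/-- The variety `ℰ_{6,1}(K) ⊆ ℙ^{26}(K)`: the points `⟨x⟩` with `x^♯ = 0`, where the
adjoint square `x^♯` is defined by `∂_x d(y) = Tr(x^♯ y)`; since the trace pairing is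
non-degenerate, `x^♯ = 0` holds if and only if `∂_x d(y) = 0` for all `y`. -/
noncomputable def e6Variety : Set (ℙ K (Fin 3 → Matrix (Fin 3) (Fin 3) K)) :=
  {p | ∀ y, e6Deriv K p.rep y = 0}

end MMset

namespace MMset

open scoped LinearAlgebra.Projectivization


section HypAux

variable (K : Type*) [Field K] (m : ℕ)

/-- The polar bilinear form of `hypForm`. -/
noncomputable def hypBilin : LinearMap.BilinForm K (Fin (2 * m) → K) :=
  LinearMap.mk₂ K
    (fun x y => ∑ i : Fin m,
      (x ⟨2 * i.1, by omega⟩ * y ⟨2 * i.1 + 1, by omega⟩ +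
       x ⟨2 * i.1 + 1, by omega⟩ * y ⟨2 * i.1, by omega⟩))
    (fun x x' y => by
      rw [← Finset.sum_add_distrib]
      exact Finset.sum_congr rfl fun i _ => by simp [Pi.add_apply]; ring)
    (fun c x y => by
      simp only [smul_eq_mul]
      rw [Finset.mul_sum]
      exact Finset.sum_congr rfl fun i _ => by simp [Pi.smul_apply, smul_eq_mul]; ring)
    (fun x y y' => by
      rw [← Finset.sum_add_distrib]
      exact Finset.sum_congr rfl fun i _ => by simp [Pi.add_apply]; ring)
    (fun c x y => by
      simp only [smul_eq_mul]
      rw [Finset.mul_sum]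
      exact Finset.sum_congr rfl fun i _ => by simp [Pi.smul_apply, smul_eq_mul]; ring)

variable {K m}

lemma hypBilin_apply (x y : Fin (2 * m) → K) :
    hypBilin K m x y = ∑ i : Fin m,
      (x ⟨2 * i.1, by omega⟩ * y ⟨2 * i.1 + 1, by omega⟩ +
       x ⟨2 * i.1 + 1, by omega⟩ * y ⟨2 * i.1, by omega⟩) := rfl

lemma hypForm_add (x y : Fin (2 * m) → K) :
    hypForm K m (x + y) = hypForm K m x + hypForm K m y + hypBilin K m x y := by
  rw [hypForm, hypForm, hypForm, hypBilin_apply, ← Finset.sum_add_distrib,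
    ← Finset.sum_add_distrib]
  exact Finset.sum_congr rfl fun i _ => by simp [Pi.add_apply]; ring

lemma hypForm_smul (c : K) (x : Fin (2 * m) → K) :
    hypForm K m (c • x) = c * (c * hypForm K m x) := by
  rw [hypForm, hypForm, Finset.mul_sum, Finset.mul_sum]
  exact Finset.sum_congr rfl fun i _ => by simp [Pi.smul_apply, smul_eq_mul]; ring

lemma hypForm_zero : hypForm K m 0 = 0 := by simp [hypForm]

lemma hypBilin_symm (x y : Fin (2 * m) → K) : hypBilin K m x y = hypBilin K m y x := by
  rw [hypBilin_apply, hypBilin_apply]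
  exact Finset.sum_congr rfl fun i _ => by ring

lemma hypBilin_isRefl : (hypBilin K m).IsRefl := fun x y h => by rwa [hypBilin_symm]

lemma hypBilin_self (x : Fin (2 * m) → K) :
    hypBilin K m x x = hypForm K m x + hypForm K m x := by
  rw [hypBilin_apply, hypForm, ← Finset.sum_add_distrib]
  exact Finset.sum_congr rfl fun i _ => by ring

lemma hypBilin_single_odd (x : Fin (2 * m) → K) (i : Fin m) :
    hypBilin K m x (Pi.single (⟨2 * i.1 + 1, by omega⟩ : Fin (2 * m)) 1) =
      x ⟨2 * i.1, by omega⟩ := by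
  rw [hypBilin_apply, Finset.sum_eq_single i]
  · rw [Pi.single_eq_same, Pi.single_eq_of_ne (by simp [Fin.ext_iff]), mul_one, mul_zero,
      add_zero]
  · intro b _ hb
    have hb' : b.1 ≠ i.1 := fun h => hb (Fin.ext h)
    rw [Pi.single_eq_of_ne (by simp [Fin.ext_iff]; omega),
      Pi.single_eq_of_ne (by simp [Fin.ext_iff]; omega), mul_zero, mul_zero, add_zero]
  · simp

lemma hypBilin_single_even (x : Fin (2 * m) → K) (i : Fin m) :
    hypBilin K m x (Pi.single (⟨2 * i.1, by omega⟩ : Fin (2 * m)) 1) =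
      x ⟨2 * i.1 + 1, by omega⟩ := by
  rw [hypBilin_apply, Finset.sum_eq_single i]
  · rw [Pi.single_eq_same, Pi.single_eq_of_ne (by simp [Fin.ext_iff]), mul_one, mul_zero,
      zero_add]
  · intro b _ hb
    have hb' : b.1 ≠ i.1 := fun h => hb (Fin.ext h)
    rw [Pi.single_eq_of_ne (by simp [Fin.ext_iff]; omega),
      Pi.single_eq_of_ne (by simp [Fin.ext_iff]; omega), mul_zero, mul_zero, add_zero]
  · simp

lemma hypBilin_nondegenerate : (hypBilin K m).Nondegenerate := by
  suffices hL : (hypBilin K m).SeparatingLeft from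
    ⟨hL, fun y hy => hL y fun x => by rw [hypBilin_symm]; exact hy x⟩
  intro x hx
  funext j
  have hj := j.2
  rcases Nat.even_or_odd j.1 with hpar | hpar
  · obtain ⟨i, hi⟩ := hpar
    have him : i < m := by omega
    have := hypBilin_single_odd x ⟨i, him⟩
    rw [hx _] at this
    have hji : j = (⟨2 * i, by omega⟩ : Fin (2 * m)) := Fin.ext (by simp; omega)
    rw [hji]
    exact this.symm
  · obtain ⟨i, hi⟩ := hpar
    have him : i < m := by omega
    have := hypBilin_single_even x ⟨i, him⟩
    rw [hx _] at this
    have hji : j = (⟨2 * i + 1, by omega⟩ : Fin (2 * m)) := Fin.ext (by simp; omega)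
    rw [hji]
    exact this.symm

end HypAux

/-- Let `H` be a hyperbolic quadric in `ℙ^{2n+1}(K)`, `n ≥ 1`.  Then every
`(n+1)`-dimensional projective subspace of `ℙ^{2n+1}(K)` (of linear dimension
`n + 2`) contains a pair of non-collinear points of `H`, i.e. two points of `H`
whose joining line is not contained in `H`. -/
theorem hyperbolic_noncollinear_pair {K : Type*} [Field K] (n : ℕ) (hn : 1 ≤ n)
    (S : Submodule K (Fin (2 * (n + 1)) → K)) (hS : Module.finrank K ↥S = n + 2) :
    ∃ p ∈ hypQuadric K (n + 1), ∃ q ∈ hypQuadric K (n + 1),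
      p.rep ∈ S ∧ q.rep ∈ S ∧
      ¬ (projPts (Submodule.span K {p.rep, q.rep}) ⊆ hypQuadric K (n + 1)) := by
  classical
  by_cases hA : ∃ p, p ∈ S ∧ hypForm K (n + 1) p = 0 ∧
      ∃ s ∈ S, hypBilin K (n + 1) p s ≠ 0
  · obtain ⟨pv, hpS, hpQ, s, hsS, hBs⟩ := hA
    set c : K := hypForm K (n + 1) s / hypBilin K (n + 1) pv s with hc
    set qv := s - c • pv with hq
    have hqS : qv ∈ S := S.sub_mem hsS (S.smul_mem _ hpS)
    have hBpp : hypBilin K (n + 1) pv pv = 0 := by rw [hypBilin_self, hpQ, add_zero]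
    have hBpq : hypBilin K (n + 1) pv qv = hypBilin K (n + 1) pv s := by
      rw [hq, map_sub, map_smul, hBpp]
      simp
    have hqQ : hypForm K (n + 1) qv = 0 := by
      have h2 : qv = s + (-c) • pv := by rw [hq, neg_smul, ← sub_eq_add_neg]
      have h1 : hypForm K (n + 1) qv = hypForm K (n + 1) s - c * hypBilin K (n + 1) pv s := by
        rw [h2, hypForm_add, hypForm_smul, hpQ, map_smul, smul_eq_mul, hypBilin_symm s pv]
        ring
      rw [h1, hc, div_mul_cancel₀ _ hBs, sub_self]
    have hBpq0 : hypBilin K (n + 1) pv qv ≠ 0 := by rw [hBpq]; exact hBs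
    have hp0 : pv ≠ 0 := fun h => hBs (by rw [h]; simp)
    have hq0 : qv ≠ 0 := fun h => hBpq0 (by rw [h]; simp)
    have hQpq : hypForm K (n + 1) (pv + qv) = hypBilin K (n + 1) pv qv := by
      rw [hypForm_add, hpQ, hqQ]; ring
    have hpq0 : pv + qv ≠ 0 := fun h => hBpq0 (by rw [← hQpq, h, hypForm_zero])
    obtain ⟨a, ha⟩ := Projectivization.exists_smul_eq_mk_rep K pv hp0
    obtain ⟨b, hb⟩ := Projectivization.exists_smul_eq_mk_rep K qv hq0
    refine ⟨Projectivization.mk K pv hp0, ?_, Projectivization.mk K qv hq0, ?_, ?_, ?_, ?_⟩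
    · simp only [hypQuadric, Set.mem_setOf_eq]
      rw [← ha, Units.smul_def, hypForm_smul, hpQ]; ring
    · simp only [hypQuadric, Set.mem_setOf_eq]
      rw [← hb, Units.smul_def, hypForm_smul, hqQ]; ring
    · rw [← ha, Units.smul_def]; exact S.smul_mem _ hpS
    · rw [← hb, Units.smul_def]; exact S.smul_mem _ hqS
    · intro hsub
      obtain ⟨e, he⟩ := Projectivization.exists_smul_eq_mk_rep K (pv + qv) hpq0
      have hpmem : pv ∈ Submodule.span K
          {(Projectivization.mk K pv hp0).rep, (Projectivization.mk K qv hq0).rep} := by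
        have h1 : (Projectivization.mk K pv hp0).rep ∈ Submodule.span K
            {(Projectivization.mk K pv hp0).rep, (Projectivization.mk K qv hq0).rep} :=
          Submodule.subset_span (Set.mem_insert _ _)
        have h2 : pv = ((a⁻¹ : Kˣ) : K) • ((Projectivization.mk K pv hp0).rep) := by
          rw [← ha, Units.smul_def, smul_smul]; simp
        have h3 := Submodule.smul_mem _ ((a⁻¹ : Kˣ) : K) h1
        rwa [← h2] at h3
      have hqmem : qv ∈ Submodule.span K
          {(Projectivization.mk K pv hp0).rep, (Projectivization.mk K qv hq0).rep} := by
        have h1 : (Projectivization.mk K qv hq0).rep ∈ Submodule.span K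
            {(Projectivization.mk K pv hp0).rep, (Projectivization.mk K qv hq0).rep} :=
          Submodule.subset_span (Set.mem_insert_of_mem _ rfl)
        have h2 : qv = ((b⁻¹ : Kˣ) : K) • ((Projectivization.mk K qv hq0).rep) := by
          rw [← hb, Units.smul_def, smul_smul]; simp
        have h3 := Submodule.smul_mem _ ((b⁻¹ : Kˣ) : K) h1
        rwa [← h2] at h3
      have hzmem : (Projectivization.mk K (pv + qv) hpq0).rep ∈ Submodule.span K
          {(Projectivization.mk K pv hp0).rep, (Projectivization.mk K qv hq0).rep} := by
        rw [← he, Units.smul_def]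
        exact Submodule.smul_mem _ _ (Submodule.add_mem _ hpmem hqmem)
      have h3 : hypForm K (n + 1) (Projectivization.mk K (pv + qv) hpq0).rep = 0 :=
        hsub (show Projectivization.mk K (pv + qv) hpq0 ∈ projPts (Submodule.span K
          {(Projectivization.mk K pv hp0).rep, (Projectivization.mk K qv hq0).rep}) from hzmem)
      rw [← he, Units.smul_def, hypForm_smul, hQpq] at h3
      have he0 : (e : K) ≠ 0 := e.ne_zero
      rcases mul_eq_zero.mp h3 with h | h
      · exact he0 h
      · rcases mul_eq_zero.mp h with h | h
        · exact he0 h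
        · exact hBpq0 h
  · push_neg at hA
    exfalso
    have hrefl := hypBilin_isRefl (K := K) (m := n + 1)
    have hnd := hypBilin_nondegenerate (K := K) (m := n + 1)
    have hVdim : Module.finrank K (Fin (2 * (n + 1)) → K) = 2 * (n + 1) := by
      simp [Module.finrank_pi]
    set T : Submodule K (Fin (2 * (n + 1)) → K) :=
      { carrier := {x | x ∈ S ∧ hypForm K (n + 1) x = 0}
        add_mem' := fun {x y} hx hy => ⟨S.add_mem hx.1 hy.1,
          by rw [hypForm_add, hx.2, hy.2, hA x hx.1 hx.2 y hy.1]; ring⟩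
        zero_mem' := ⟨S.zero_mem, hypForm_zero⟩
        smul_mem' := fun c x hx => ⟨S.smul_mem c hx.1,
          by rw [hypForm_smul, hx.2]; ring⟩ } with hTdef
    have hTmem : ∀ x, x ∈ T ↔ (x ∈ S ∧ hypForm K (n + 1) x = 0) := fun x => Iff.rfl
    have hTS : T ≤ S := fun x hx => ((hTmem x).mp hx).1
    have hSperp : S ≤ (hypBilin K (n + 1)).orthogonal T := by
      intro v hv x hx
      exact hA x ((hTmem x).mp hx).1 ((hTmem x).mp hx).2 v hv
    -- the totally singular subspace U₁ (even coordinates)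
    set odds : (Fin (2 * (n + 1)) → K) →ₗ[K] (Fin (n + 1) → K) :=
      LinearMap.pi (fun i : Fin (n + 1) =>
        LinearMap.proj (⟨2 * i.1 + 1, by omega⟩ : Fin (2 * (n + 1)))) with hodds
    set U₁ := LinearMap.ker odds with hU₁def
    have hU₁mem : ∀ x, x ∈ U₁ ↔ ∀ i : Fin (n + 1), x ⟨2 * i.1 + 1, by omega⟩ = 0 := by
      intro x
      rw [hU₁def, LinearMap.mem_ker, funext_iff]
      simp [hodds, LinearMap.pi_apply]
    have hoddssurj : Function.Surjective odds := by
      intro z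
      refine ⟨fun j => if h : j.1 % 2 = 1 then z ⟨j.1 / 2, by omega⟩ else 0, ?_⟩
      funext i
      simp only [hodds, LinearMap.pi_apply, LinearMap.proj_apply]
      rw [dif_pos (by omega)]
      congr 1
      exact Fin.ext (by simp; omega)
    have hU₁dim : Module.finrank K U₁ = n + 1 := by
      have h1 := LinearMap.finrank_range_add_finrank_ker odds
      rw [LinearMap.range_eq_top.mpr hoddssurj, finrank_top, hVdim, ← hU₁def] at h1
      have h2 : Module.finrank K (Fin (n + 1) → K) = n + 1 := by simp [Module.finrank_pi]
      omega
    have hU₁sing : ∀ x ∈ U₁, hypForm K (n + 1) x = 0 := by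
      intro x hx
      rw [hypForm]
      exact Finset.sum_eq_zero fun i _ => by rw [(hU₁mem x).mp hx i, mul_zero]
    have hU₁orth : ∀ x ∈ U₁, ∀ y ∈ U₁, hypBilin K (n + 1) x y = 0 := by
      intro x hx y hy
      rw [hypBilin_apply]
      exact Finset.sum_eq_zero fun i _ => by
        rw [(hU₁mem y).mp hy i, (hU₁mem x).mp hx i, mul_zero, zero_mul, add_zero]
    -- a complement T' of T ⊓ U₁ inside T
    obtain ⟨C, hC⟩ := Submodule.exists_isCompl (Submodule.comap T.subtype U₁)
    set T' := Submodule.map T.subtype C with hT'def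
    have hsplit : (T ⊓ U₁) ⊔ T' = T := by
      rw [hT'def, ← Submodule.map_comap_subtype, ← Submodule.map_sup, hC.codisjoint.eq_top,
        Submodule.map_top, Submodule.range_subtype]
    have hdim_split : finrank K ↥(T ⊓ U₁) + finrank K ↥T' = finrank K ↥T := by
      have h1 := Submodule.finrank_add_eq_of_isCompl hC
      have h2 : finrank K ↥(Submodule.map T.subtype (Submodule.comap T.subtype U₁)) =
          finrank K ↥(Submodule.comap T.subtype U₁) :=
        Submodule.finrank_map_subtype_eq T _
      rw [Submodule.map_comap_subtype] at h2
      have h3 : finrank K ↥T' = finrank K ↥C := Submodule.finrank_map_subtype_eq T C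
      omega
    have horthT' : finrank K ↥T' + finrank K ↥((hypBilin K (n + 1)).orthogonal T') =
        2 * (n + 1) := by
      have h1 := LinearMap.BilinForm.finrank_add_finrank_orthogonal hrefl T'
      rw [LinearMap.BilinForm.orthogonal_top_eq_bot hnd, inf_bot_eq, finrank_bot, add_zero,
        hVdim] at h1
      exact h1
    have horthT : finrank K ↥T + finrank K ↥((hypBilin K (n + 1)).orthogonal T) =
        2 * (n + 1) := by
      have h1 := LinearMap.BilinForm.finrank_add_finrank_orthogonal hrefl T
      rw [LinearMap.BilinForm.orthogonal_top_eq_bot hnd, inf_bot_eq, finrank_bot, add_zero,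
        hVdim] at h1
      exact h1
    set A := U₁ ⊓ (hypBilin K (n + 1)).orthogonal T' with hAdef
    have hAdim : finrank K ↥A + 2 * (n + 1) ≥
        (n + 1) + finrank K ↥((hypBilin K (n + 1)).orthogonal T') := by
      have h1 := Submodule.finrank_sup_add_finrank_inf_eq U₁
        ((hypBilin K (n + 1)).orthogonal T')
      have h2 : finrank K ↥(U₁ ⊔ (hypBilin K (n + 1)).orthogonal T') ≤
          finrank K (Fin (2 * (n + 1)) → K) := Submodule.finrank_le _
      rw [hVdim] at h2
      rw [hU₁dim, ← hAdef] at h1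
      omega
    have hAorthT : A ≤ (hypBilin K (n + 1)).orthogonal T := by
      intro v hv
      obtain ⟨hvU₁, hvT'⟩ := Submodule.mem_inf.mp hv
      intro x hx
      obtain ⟨x₁, hx₁, x₂, hx₂, rfl⟩ := Submodule.mem_sup.mp (hsplit ▸ hx)
      show hypBilin K (n + 1) (x₁ + x₂) v = 0
      rw [map_add, LinearMap.add_apply, hU₁orth x₁ (Submodule.mem_inf.mp hx₁).2 v hvU₁,
        hvT' x₂ hx₂, add_zero]
    have hTorthT : T ≤ (hypBilin K (n + 1)).orthogonal T := le_trans hTS hSperp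
    have hUsing : ∀ x ∈ A ⊔ T, hypForm K (n + 1) x = 0 := by
      intro x hx
      obtain ⟨a', ha', t', ht', rfl⟩ := Submodule.mem_sup.mp hx
      rw [hypForm_add, hU₁sing a' (Submodule.mem_inf.mp ha').1, ((hTmem t').mp ht').2,
        hypBilin_symm a' t', hAorthT ha' t' ht']
      ring
    have c1 := Submodule.finrank_sup_add_finrank_inf_eq A T
    have c2 : finrank K ↥(A ⊓ T) ≤ finrank K ↥(T ⊓ U₁) :=
      Submodule.finrank_mono (fun x hx => by
        obtain ⟨hxA, hxT⟩ := Submodule.mem_inf.mp hx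
        exact Submodule.mem_inf.mpr ⟨hxT, (Submodule.mem_inf.mp hxA).1⟩)
    have c3 := Submodule.finrank_sup_add_finrank_inf_eq S (A ⊔ T)
    have c4 : finrank K ↥(S ⊔ (A ⊔ T)) ≤
        finrank K ↥((hypBilin K (n + 1)).orthogonal T) :=
      Submodule.finrank_mono (sup_le hSperp (sup_le hAorthT hTorthT))
    have c5 : finrank K ↥(S ⊓ (A ⊔ T)) ≤ finrank K ↥T :=
      Submodule.finrank_mono (fun x hx => by
        obtain ⟨hxS, hxU⟩ := Submodule.mem_inf.mp hx
        exact (hTmem x).mpr ⟨hxS, hUsing x hxU⟩)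
    omega

end MMset
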